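/- Assume that there exists at least one (ℓ,k,t)-dominating function of G (so that for every v ∈ V, ∑_{w ∈ N[v] \ 𝓕} t(w) together with ℓ·|N[v] ∩ 𝓕| can reach k(v); in particular the construction below is well defined). Let f' be an (ℓ,k₀,t₀)-dominating function of G, and define f : V → ℕ by f(v) = t(v) if v ∉ 𝓕 and f(v) = f'(v) otherwise. Then f is an (ℓ,k,t)-dominating function of G, and f(V) = f'(V) + ∑_{v ∈ V \ 𝓕} t(v). -/
import Mathlib


open Classical Finset

/-- The closed neighborhood `N[v]` of `v` in `G`, as a finset. -/
noncomputable def closedNbhd {V : Type*} [Fintype V] (G : SimpleGraph V) (v : V) : Finset V :=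
  Finset.univ.filter (fun w => G.Adj v w ∨ w = v)

/-- `f` is an `(ℓ,k,t)`-dominating function of `G`: `f ≤ ℓ` everywhere,
`f(N[v]) ≥ k(v)` for all `v`, and `f(v) = t(v)` at every non-free vertex
(`t v = none` means the vertex `v` is free). -/
def IsLDomFn {V : Type*} [Fintype V] (G : SimpleGraph V) (ℓ : ℕ) (k : V → ℕ)
    (t : V → Option ℕ) (f : V → ℕ) : Prop :=
  (∀ v, f v ≤ ℓ) ∧ (∀ v, k v ≤ ∑ w ∈ closedNbhd G v, f w) ∧
    (∀ v a, t v = some a → f v = a)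

/-- `γ_{ℓ,k,t}(G)`: minimum weight of an `(ℓ,k,t)`-dominating function. -/
noncomputable def gammaL {V : Type*} [Fintype V] (G : SimpleGraph V) (ℓ : ℕ) (k : V → ℕ)
    (t : V → Option ℕ) : ℕ :=
  sInf {s | ∃ f, IsLDomFn G ℓ k t f ∧ s = ∑ v, f v}

/-- `k₀(v) = k(v) ∸ ∑_{w ∈ N[v] \ 𝓕} t(w)`. -/
noncomputable def kZero {V : Type*} [Fintype V] (G : SimpleGraph V) (k : V → ℕ)
    (t : V → Option ℕ) : V → ℕ :=
  fun v => k v - ∑ w ∈ (closedNbhd G v).filter (fun w => (t w).isSome), (t w).getD 0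

/-- `t₀(v) = 0` if `t(v) ≠ F`, and `t₀(v) = F` otherwise. -/
def tZero {V : Type*} (t : V → Option ℕ) : V → Option ℕ :=
  fun v => (t v).map (fun _ => 0)

/-- assuming an `(ℓ,k,t)`-dominating function of `G` exists, if `f'` is an
`(ℓ,k₀,t₀)`-dominating function, then `f`, equal to `t` on the non-free vertices and to
`f'` on the free ones, is an `(ℓ,k,t)`-dominating function with
`f(V) = f'(V) + ∑_{v ∉ 𝓕} t(v)`. -/
theorem stmt_16 {V : Type*} [Fintype V] (G : SimpleGraph V) (ℓ : ℕ) (k : V → ℕ)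
    (t : V → Option ℕ) (ht : ∀ v a, t v = some a → a ≤ ℓ)
    (hex : ∃ f, IsLDomFn G ℓ k t f)
    (f' : V → ℕ) (hf' : IsLDomFn G ℓ (kZero G k t) (tZero t) f') :
    IsLDomFn G ℓ k t (fun v => (t v).getD (f' v)) ∧
      (∑ v, (t v).getD (f' v)) =
        (∑ v, f' v) + ∑ v ∈ Finset.univ.filter (fun v => (t v).isSome), (t v).getD 0 := by
  obtain ⟨hl', hk', ht'⟩ := hf'
  have hzero : ∀ v, (t v).isSome → f' v = 0 := by
    intro v hv
    obtain ⟨a, ha⟩ := Option.isSome_iff_exists.mp hv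
    exact ht' v 0 (by simp [tZero, ha])
  have key : ∀ s : Finset V, ∑ w ∈ s, (t w).getD (f' w)
      = (∑ w ∈ s.filter (fun w => (t w).isSome), (t w).getD 0) + ∑ w ∈ s, f' w := by
    intro s
    rw [Finset.sum_filter, ← Finset.sum_add_distrib]
    refine Finset.sum_congr rfl fun w _ => ?_
    cases hw : t w with
    | none => simp [hw]
    | some a => simp [hw, hzero w (by simp [hw])]
  refine ⟨⟨?_, ?_, ?_⟩, ?_⟩
  · intro v
    cases hv : t v with
    | none => simpa [hv] using hl' v
    | some a => simpa [hv] using ht v a hv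
  · intro v
    rw [key]
    calc k v ≤ k v - (∑ w ∈ (closedNbhd G v).filter (fun w => (t w).isSome), (t w).getD 0)
            + (∑ w ∈ (closedNbhd G v).filter (fun w => (t w).isSome), (t w).getD 0) := le_tsub_add
      _ ≤ (∑ w ∈ (closedNbhd G v).filter (fun w => (t w).isSome), (t w).getD 0)
            + ∑ w ∈ closedNbhd G v, f' w := by
          rw [Nat.add_comm]
          exact Nat.add_le_add_left (hk' v) _
  · intro v a hv; simp [hv]
  · rw [key univ, Nat.add_comm]
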